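/- arXiv:1110.4026 — 2 statements merged into one kernel-verified Lean document; each statement's English description precedes it below -/
import Mathlib

section
/- Let Λ be a k-graph and x an infinite path (functor Ω_k → Λ). If for every m ≠ n in ℕ^k the finite path λ := x(0, p + (m∨n)) satisfies λ(m, m + d(λ) − (m∨n)) ≠ λ(n, n + d(λ) − (m∨n)) for some p ∈ ℕ^k, then x is aperiodic. Conversely, if x is aperiodic then for all m ≠ n there exists such a λ = x(0, p + (m∨n)). -/
structure KGraph (k : ℕ) where
  Obj : Type
  Mor : Type
  src : Mor → Obj
  rng : Mor → Obj
  idm : Obj → Mor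
  comp : Mor → Mor → Mor
  deg : Mor → Fin k → ℕ
  idm_src : ∀ v, src (idm v) = v
  idm_rng : ∀ v, rng (idm v) = v
  comp_src : ∀ μ ν, src μ = rng ν → src (comp μ ν) = src ν
  comp_rng : ∀ μ ν, src μ = rng ν → rng (comp μ ν) = rng μ
  comp_assoc : ∀ μ ν ξ, src μ = rng ν → src ν = rng ξ →
    comp (comp μ ν) ξ = comp μ (comp ν ξ)
  idm_comp : ∀ μ, comp (idm (rng μ)) μ = μ
  comp_idm : ∀ μ, comp μ (idm (src μ)) = μ
  deg_comp : ∀ μ ν, src μ = rng ν → deg (comp μ ν) = deg μ + deg ν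
  deg_idm : ∀ v, deg (idm v) = 0
  factor : ∀ (l : Mor) (m n : Fin k → ℕ), deg l = m + n →
    ∃! p : Mor × Mor, src p.1 = rng p.2 ∧ deg p.1 = m ∧ deg p.2 = n ∧ comp p.1 p.2 = l

namespace KGraph

variable {k : ℕ} (G : KGraph k)

/-- The segment `l(a,b)` of a path `l`: the unique middle factor of degree `b - a`
in the factorization `l = l(0,a) l(a,b) l(b, d(l))`. -/
noncomputable def seg (l : G.Mor) (a b : Fin k → ℕ) (hab : a ≤ b) (hb : b ≤ G.deg l) : G.Mor :=
  have h1 : G.deg l = a + (G.deg l - a) := by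
    funext i
    have h2 : a i ≤ b i := hab i
    have h3 : b i ≤ G.deg l i := hb i
    simp only [Pi.add_apply, Pi.sub_apply]
    omega
  have h2 : G.deg ((G.factor l a (G.deg l - a) h1).exists.choose.2) =
      (b - a) + (G.deg l - b) := by
    have hp := (G.factor l a (G.deg l - a) h1).exists.choose_spec
    rw [hp.2.2.1]
    funext i
    have h3 : a i ≤ b i := hab i
    have h4 : b i ≤ G.deg l i := hb i
    simp only [Pi.add_apply, Pi.sub_apply]
    omega
  ((G.factor _ (b - a) (G.deg l - b) h2).exists.choose).1

/-- `l` is a common extension of `μ` and `ν`. -/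
def CommonExt (μ ν l : G.Mor) : Prop :=
  (∃ μ', G.src μ = G.rng μ' ∧ G.comp μ μ' = l) ∧
  (∃ ν', G.src ν = G.rng ν' ∧ G.comp ν ν' = l)

/-- The set of minimal common extensions of `μ` and `ν`. -/
def MCE (μ ν : G.Mor) : Set G.Mor :=
  {l | G.CommonExt μ ν l ∧ G.deg l = G.deg μ ⊔ G.deg ν}

/-- A finite path of shape `len`: a degree-preserving functor from the grid graph
`Ω_{k,len}` to `G`. -/
structure Path (G : KGraph k) where
  len : Fin k → ℕ
  map : (p q : Fin k → ℕ) → p ≤ q → q ≤ len → G.Mor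
  deg_map : ∀ p q hpq hq, G.deg (map p q hpq hq) = q - p
  comp_ok : ∀ p q r (hpq : p ≤ q) (hqr : q ≤ r) (hr : r ≤ len),
    G.src (map p q hpq (le_trans hqr hr)) = G.rng (map q r hqr hr)
  map_comp : ∀ p q r (hpq : p ≤ q) (hqr : q ≤ r) (hr : r ≤ len),
    G.comp (map p q hpq (le_trans hqr hr)) (map q r hqr hr) = map p r (le_trans hpq hqr) hr

/-- An infinite path: a degree-preserving functor from the grid graph `Ω_k` to `G`. -/
structure InfPath (G : KGraph k) where
  map : (p q : Fin k → ℕ) → p ≤ q → G.Mor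
  deg_map : ∀ p q hpq, G.deg (map p q hpq) = q - p
  comp_ok : ∀ p q r (hpq : p ≤ q) (hqr : q ≤ r),
    G.src (map p q hpq) = G.rng (map q r hqr)
  map_comp : ∀ p q r (hpq : p ≤ q) (hqr : q ≤ r),
    G.comp (map p q hpq) (map q r hqr) = map p r (le_trans hpq hqr)

/-- The shift `σ^m x` of a finite path. -/
def Path.shift {G : KGraph k} (x : G.Path) (m : Fin k → ℕ) (hm : m ≤ x.len) : G.Path where
  len := x.len - m
  map p q hpq hq := x.map (m + p) (m + q)
    (by intro i; have h : p i ≤ q i := hpq i; simp only [Pi.add_apply]; omega)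
    (by intro i; have h1 : q i ≤ (x.len - m) i := hq i; have h2 : m i ≤ x.len i := hm i
        simp only [Pi.sub_apply] at h1; simp only [Pi.add_apply]; omega)
  deg_map := by
    intro p q hpq hq
    rw [x.deg_map]
    funext i; simp only [Pi.sub_apply, Pi.add_apply]; omega
  comp_ok := by
    intro p q r hpq hqr hr
    exact x.comp_ok _ _ _ _ _ _
  map_comp := by
    intro p q r hpq hqr hr
    exact x.map_comp _ _ _ _ _ _

/-- The shift `σ^m x` of an infinite path. -/
def InfPath.shift {G : KGraph k} (x : G.InfPath) (m : Fin k → ℕ) : G.InfPath where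
  map p q hpq := x.map (m + p) (m + q)
    (by intro i; have h : p i ≤ q i := hpq i; simp only [Pi.add_apply]; omega)
  deg_map := by
    intro p q hpq
    rw [x.deg_map]
    funext i; simp only [Pi.sub_apply, Pi.add_apply]; omega
  comp_ok := by
    intro p q r hpq hqr
    exact x.comp_ok _ _ _ _ _
  map_comp := by
    intro p q r hpq hqr
    exact x.map_comp _ _ _ _ _

/-- An infinite path is aperiodic if `σ^m x = σ^n x` implies `m = n`. -/
def InfPath.Aperiodic {G : KGraph k} (x : G.InfPath) : Prop :=
  ∀ m n : Fin k → ℕ, x.shift m = x.shift n → m = n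

/-- Condition (⋆): `l(m, m + d(l) - (m ∨ n)) ≠ l(n, n + d(l) - (m ∨ n))`. -/
def SegCond (l : G.Mor) (m n : Fin k → ℕ) : Prop :=
  ∀ (h1 : m ≤ m + (G.deg l - (m ⊔ n))) (h2 : m + (G.deg l - (m ⊔ n)) ≤ G.deg l)
    (h3 : n ≤ n + (G.deg l - (m ⊔ n))) (h4 : n + (G.deg l - (m ⊔ n)) ≤ G.deg l),
    G.seg l m (m + (G.deg l - (m ⊔ n))) h1 h2 ≠ G.seg l n (n + (G.deg l - (m ⊔ n))) h3 h4

end KGraph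

namespace KGraph

variable {k : ℕ} {G : KGraph k}

lemma InfPath.map_congr (x : G.InfPath) {a b a' b' : Fin k → ℕ} (ha : a = a') (hb : b = b')
    (h : a ≤ b) (h' : a' ≤ b') : x.map a b h = x.map a' b' h' := by
  subst ha; subst hb; rfl

lemma InfPath.ext' {x y : G.InfPath}
    (h : ∀ p q hpq, x.map p q hpq = y.map p q hpq) : x = y := by
  cases x; cases y
  simp only [InfPath.mk.injEq]
  funext p q hpq
  exact h p q hpq

lemma decomp_unique (l : G.Mor) (a b : Fin k → ℕ) (hab : a ≤ b) (hb : b ≤ G.deg l)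
    (ν μ ξ ν' μ' ξ' : G.Mor)
    (s1 : G.src μ = G.rng ν) (s2 : G.src ν = G.rng ξ)
    (d1 : G.deg μ = a) (d2 : G.deg ν = b - a) (d3 : G.deg ξ = G.deg l - b)
    (c1 : G.comp μ (G.comp ν ξ) = l)
    (s1' : G.src μ' = G.rng ν') (s2' : G.src ν' = G.rng ξ')
    (d1' : G.deg μ' = a) (d2' : G.deg ν' = b - a) (d3' : G.deg ξ' = G.deg l - b)
    (c1' : G.comp μ' (G.comp ν' ξ') = l) : ν = ν' := by
  have h1 : G.deg l = a + (G.deg l - a) := by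
    funext i
    have h2' : a i ≤ b i := hab i
    have h3' : b i ≤ G.deg l i := hb i
    simp only [Pi.add_apply, Pi.sub_apply]
    omega
  have hdm : G.deg (G.comp ν ξ) = G.deg l - a := by
    rw [G.deg_comp _ _ s2, d2, d3]
    funext i
    have h2' : a i ≤ b i := hab i
    have h3' : b i ≤ G.deg l i := hb i
    simp only [Pi.add_apply, Pi.sub_apply]
    omega
  have hdm' : G.deg (G.comp ν' ξ') = G.deg l - a := by
    rw [G.deg_comp _ _ s2', d2', d3']
    funext i
    have h2' : a i ≤ b i := hab i
    have h3' : b i ≤ G.deg l i := hb i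
    simp only [Pi.add_apply, Pi.sub_apply]
    omega
  have e1 : (μ, G.comp ν ξ) = (μ', G.comp ν' ξ') :=
    (G.factor l a (G.deg l - a) h1).unique
      ⟨by simpa [G.comp_rng _ _ s2] using s1, d1, hdm, c1⟩
      ⟨by simpa [G.comp_rng _ _ s2'] using s1', d1', hdm', c1'⟩
  have e1' : G.comp ν ξ = G.comp ν' ξ' := congrArg Prod.snd e1
  have h2 : G.deg (G.comp ν ξ) = (b - a) + (G.deg l - b) := by
    rw [G.deg_comp _ _ s2, d2, d3]
  have e2 : ((ν, ξ) : G.Mor × G.Mor) = (ν', ξ') :=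
    (G.factor (G.comp ν ξ) (b - a) (G.deg l - b) h2).unique
      ⟨s2, d2, d3, rfl⟩ ⟨s2', d2', d3', e1'.symm⟩
  exact congrArg Prod.fst e2

lemma seg_spec (l : G.Mor) (a b : Fin k → ℕ) (hab : a ≤ b) (hb : b ≤ G.deg l) :
    ∃ μ ξ, G.src μ = G.rng (G.seg l a b hab hb) ∧ G.src (G.seg l a b hab hb) = G.rng ξ ∧
      G.deg μ = a ∧ G.deg (G.seg l a b hab hb) = b - a ∧ G.deg ξ = G.deg l - b ∧
      G.comp μ (G.comp (G.seg l a b hab hb) ξ) = l := by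
  have h1 : G.deg l = a + (G.deg l - a) := by
    funext i
    have h2 : a i ≤ b i := hab i
    have h3 : b i ≤ G.deg l i := hb i
    simp only [Pi.add_apply, Pi.sub_apply]
    omega
  obtain ⟨hs, hd1, hd2, hc⟩ := (G.factor l a (G.deg l - a) h1).exists.choose_spec
  have h2 : G.deg ((G.factor l a (G.deg l - a) h1).exists.choose.2) =
      (b - a) + (G.deg l - b) := by
    rw [hd2]
    funext i
    have h3 : a i ≤ b i := hab i
    have h4 : b i ≤ G.deg l i := hb i
    simp only [Pi.add_apply, Pi.sub_apply]
    omega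
  obtain ⟨hs', hd1', hd2', hc'⟩ :=
    (G.factor _ (b - a) (G.deg l - b) h2).exists.choose_spec
  have hseg : G.seg l a b hab hb =
      (G.factor ((G.factor l a (G.deg l - a) h1).exists.choose.2)
        (b - a) (G.deg l - b) h2).exists.choose.1 := rfl
  rw [hseg]
  refine ⟨(G.factor l a (G.deg l - a) h1).exists.choose.1,
    (G.factor _ (b - a) (G.deg l - b) h2).exists.choose.2, ?_, hs', hd1, hd1', hd2', ?_⟩
  · exact hs.trans ((congrArg G.rng hc').symm.trans (G.comp_rng _ _ hs'))
  · rw [hc', hc]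

lemma seg_eq_of_decomp (l : G.Mor) (a b : Fin k → ℕ) (hab : a ≤ b) (hb : b ≤ G.deg l)
    (ν μ ξ : G.Mor)
    (s1 : G.src μ = G.rng ν) (s2 : G.src ν = G.rng ξ)
    (d1 : G.deg μ = a) (d2 : G.deg ν = b - a) (d3 : G.deg ξ = G.deg l - b)
    (c1 : G.comp μ (G.comp ν ξ) = l) : G.seg l a b hab hb = ν := by
  obtain ⟨μ', ξ', s1', s2', d1', d2', d3', c1'⟩ := seg_spec l a b hab hb
  exact decomp_unique l a b hab hb _ μ' ξ' ν μ ξ s1' s2' d1' d2' d3' c1' s1 s2 d1 d2 d3 c1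

lemma seg_infpath (x : G.InfPath) (N a b : Fin k → ℕ) (hab : a ≤ b)
    (hb : b ≤ G.deg (x.map 0 N zero_le)) :
    G.seg (x.map 0 N zero_le) a b hab hb = x.map a b hab := by
  have hN : G.deg (x.map 0 N zero_le) = N := by
    rw [x.deg_map]; funext i; simp
  have hbN : b ≤ N := hN ▸ hb
  have haN : a ≤ N := le_trans hab hbN
  refine seg_eq_of_decomp _ a b hab hb _ (x.map 0 a zero_le) (x.map b N hbN)
    ?_ ?_ ?_ ?_ ?_ ?_
  · exact x.comp_ok 0 a b zero_le hab
  · exact x.comp_ok a b N hab hbN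
  · rw [x.deg_map]; funext i; simp
  · rw [x.deg_map]
  · rw [x.deg_map, hN]
  · rw [x.map_comp a b N hab hbN, x.map_comp 0 a N zero_le haN]

end KGraph

/-- If for every `m ≠ n` the finite path `λ := x(0, p + (m ∨ n))` satisfies (⋆)
for some `p`, then `x` is aperiodic; conversely, if `x` is aperiodic then for
all `m ≠ n` there exists such a `λ`. -/
theorem aperiodic_of_star_and_conversely {k : ℕ} (G : KGraph k) (x : G.InfPath) :
    ((∀ m n : Fin k → ℕ, m ≠ n → ∃ p : Fin k → ℕ,
        G.SegCond (x.map 0 (p + (m ⊔ n)) zero_le) m n) → x.Aperiodic) ∧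
    (x.Aperiodic → ∀ m n : Fin k → ℕ, m ≠ n → ∃ p : Fin k → ℕ,
        G.SegCond (x.map 0 (p + (m ⊔ n)) zero_le) m n) := by
  constructor
  · -- (⋆) implies aperiodic
    intro hstar m n heq
    by_contra hne
    obtain ⟨p, hc⟩ := hstar m n hne
    have hdeg : G.deg (x.map 0 (p + (m ⊔ n)) zero_le) = p + (m ⊔ n) := by
      rw [x.deg_map]; funext i; simp
    have hD : G.deg (x.map 0 (p + (m ⊔ n)) zero_le) - (m ⊔ n) = p := by
      rw [hdeg]; funext i
      simp only [Pi.sub_apply, Pi.add_apply, Pi.sup_apply]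
      omega
    have h1 : m ≤ m + (G.deg (x.map 0 (p + (m ⊔ n)) zero_le) - (m ⊔ n)) := le_self_add
    have h2 : m + (G.deg (x.map 0 (p + (m ⊔ n)) zero_le) - (m ⊔ n)) ≤
        G.deg (x.map 0 (p + (m ⊔ n)) zero_le) := by
      rw [hD, hdeg, add_comm p (m ⊔ n)]
      exact add_le_add_left le_sup_left p
    have h3 : n ≤ n + (G.deg (x.map 0 (p + (m ⊔ n)) zero_le) - (m ⊔ n)) := le_self_add
    have h4 : n + (G.deg (x.map 0 (p + (m ⊔ n)) zero_le) - (m ⊔ n)) ≤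
        G.deg (x.map 0 (p + (m ⊔ n)) zero_le) := by
      rw [hD, hdeg, add_comm p (m ⊔ n)]
      exact add_le_add_left le_sup_right p
    apply hc h1 h2 h3 h4
    rw [KGraph.seg_infpath x, KGraph.seg_infpath x]
    have key : x.map m (m + p) le_self_add = x.map n (n + p) le_self_add := by
      have h := congrArg (fun z : G.InfPath => z.map 0 p zero_le) heq
      exact ((x.map_congr (add_zero m).symm rfl le_self_add
        (by intro i; simp only [Pi.add_apply, Pi.zero_apply]; omega)).trans h).trans
        (x.map_congr (add_zero n) rfl _ le_self_add)
    exact (x.map_congr rfl (by rw [hD]) h1 le_self_add).trans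
      (key.trans (x.map_congr rfl (by rw [hD]) le_self_add h3))
  · -- aperiodic implies (⋆)
    intro hap m n hne
    have hexp : ∃ p : Fin k → ℕ,
        x.map m (m + p) le_self_add ≠ x.map n (n + p) le_self_add := by
      by_contra hno
      push_neg at hno
      apply hne
      apply hap
      apply KGraph.InfPath.ext'
      intro q q' hq
      show x.map (m + q) (m + q') _ = x.map (n + q) (n + q') _
      have hL : G.deg (x.map m (m + q') le_self_add) = q + (q' - q) := by
        rw [x.deg_map]
        funext i
        have hqi : q i ≤ q' i := hq i
        simp only [Pi.add_apply, Pi.sub_apply]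
        omega
      have hmq : m + q ≤ m + q' := add_le_add_right hq m
      have hnq : n + q ≤ n + q' := add_le_add_right hq n
      have dfst : ∀ (c : Fin k → ℕ), G.deg (x.map c (c + q) le_self_add) = q := by
        intro c
        rw [x.deg_map]
        funext i
        simp only [Pi.add_apply, Pi.sub_apply]
        omega
      have dsnd : ∀ (c : Fin k → ℕ) (h : c + q ≤ c + q'),
          G.deg (x.map (c + q) (c + q') h) = q' - q := by
        intro c h
        rw [x.deg_map]
        funext i
        simp only [Pi.add_apply, Pi.sub_apply]
        omega
      have e : ((x.map m (m + q) le_self_add, x.map (m + q) (m + q') hmq) :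
            G.Mor × G.Mor) = (x.map n (n + q) le_self_add, x.map (n + q) (n + q') hnq) :=
        (G.factor (x.map m (m + q') le_self_add) q (q' - q) hL).unique
          ⟨x.comp_ok m (m + q) (m + q') le_self_add hmq, dfst m, dsnd m hmq,
            x.map_comp m (m + q) (m + q') le_self_add hmq⟩
          ⟨x.comp_ok n (n + q) (n + q') le_self_add hnq, dfst n, dsnd n hnq,
            (x.map_comp n (n + q) (n + q') le_self_add hnq).trans (hno q').symm⟩
      exact congrArg Prod.snd e
    obtain ⟨p, hp⟩ := hexp
    refine ⟨p, ?_⟩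
    intro h1 h2 h3 h4
    have hD : G.deg (x.map 0 (p + (m ⊔ n)) zero_le) - (m ⊔ n) = p := by
      rw [x.deg_map]
      funext i
      simp only [Pi.sub_apply, Pi.add_apply, Pi.sup_apply, Pi.zero_apply]
      omega
    rw [KGraph.seg_infpath x, KGraph.seg_infpath x]
    intro he
    exact hp ((x.map_congr rfl (by rw [hD]) le_self_add h1).trans
      (he.trans (x.map_congr rfl (by rw [hD]) h3 le_self_add)))
end

section
/- Let Λ be a discrete k-graph with no sources, v ∈ Λ^0, and suppose for every pair of distinct paths α, β with s(α) = s(β) there exists τ ∈ s(α)Λ with MCE(ατ, βτ) = ∅. Then for every v ∈ Λ^0 and every m ≠ n ∈ ℕ^k there exists λ ∈ vΛ with d(λ) ≥ m∨n satisfying λ(m, m + d(λ) − (m∨n)) ≠ λ(n, n + d(λ) − (m∨n)). -/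
namespace KGraph

variable {k : ℕ} (G : KGraph k)

/-- Uniqueness of the middle factor in a triple factorization. -/
lemma triple_unique {l x y z x' y' z' : G.Mor} {a b : Fin k → ℕ}
    (hxy : G.src x = G.rng y) (hyz : G.src y = G.rng z)
    (hx : G.deg x = a) (hy : G.deg y = b)
    (h : G.comp x (G.comp y z) = l)
    (hxy' : G.src x' = G.rng y') (hyz' : G.src y' = G.rng z')
    (hx' : G.deg x' = a) (hy' : G.deg y' = b)
    (h' : G.comp x' (G.comp y' z') = l) : y = y' := by
  have hrz : G.rng (G.comp y z) = G.rng y := G.comp_rng y z hyz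
  have hrz' : G.rng (G.comp y' z') = G.rng y' := G.comp_rng y' z' hyz'
  have hxyz : G.src x = G.rng (G.comp y z) := by rw [hrz]; exact hxy
  have hxyz' : G.src x' = G.rng (G.comp y' z') := by rw [hrz']; exact hxy'
  have hdeg : G.deg l = G.deg x + (G.deg y + G.deg z) := by
    rw [← h, G.deg_comp x (G.comp y z) hxyz, G.deg_comp y z hyz]
  have hdeg' : G.deg l = G.deg x' + (G.deg y' + G.deg z') := by
    rw [← h', G.deg_comp x' (G.comp y' z') hxyz', G.deg_comp y' z' hyz']
  have hdla : G.deg l = a + (G.deg l - a) := by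
    funext i
    have h1 := congrFun hdeg i
    have h2 := congrFun hx i
    simp only [Pi.add_apply, Pi.sub_apply] at *
    omega
  have hdyz : G.deg (G.comp y z) = G.deg l - a := by
    rw [G.deg_comp y z hyz]
    funext i
    have h1 := congrFun hdeg i
    have h2 := congrFun hx i
    simp only [Pi.add_apply, Pi.sub_apply] at *
    omega
  have hdyz' : G.deg (G.comp y' z') = G.deg l - a := by
    rw [G.deg_comp y' z' hyz']
    funext i
    have h1 := congrFun hdeg' i
    have h2 := congrFun hx' i
    simp only [Pi.add_apply, Pi.sub_apply] at *
    omega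
  have e1 : ((x, G.comp y z) : G.Mor × G.Mor) = (x', G.comp y' z') :=
    (G.factor l a (G.deg l - a) hdla).unique ⟨hxyz, hx, hdyz, h⟩ ⟨hxyz', hx', hdyz', h'⟩
  have e2 : G.comp y z = G.comp y' z' := congrArg Prod.snd e1
  have hdz : G.deg z = G.deg l - (a + b) := by
    funext i
    have h1 := congrFun hdeg i
    have h2 := congrFun hx i
    have h3 := congrFun hy i
    simp only [Pi.add_apply, Pi.sub_apply] at *
    omega
  have hdz' : G.deg z' = G.deg l - (a + b) := by
    funext i
    have h1 := congrFun hdeg' i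
    have h2 := congrFun hx' i
    have h3 := congrFun hy' i
    simp only [Pi.add_apply, Pi.sub_apply] at *
    omega
  have hd2 : G.deg (G.comp y z) = b + (G.deg l - (a + b)) := by
    rw [G.deg_comp y z hyz, hy, hdz]
  have e3 : ((y, z) : G.Mor × G.Mor) = (y', z') :=
    (G.factor (G.comp y z) b (G.deg l - (a + b)) hd2).unique
      ⟨hyz, hy, hdz, rfl⟩ ⟨hyz', hy', hdz', e2.symm⟩
  exact congrArg Prod.fst e3

/-- Characterization of `seg`: any triple factorization with the right degrees computes it. -/
lemma seg_eq {l : G.Mor} {a b : Fin k → ℕ} (hab : a ≤ b) (hb : b ≤ G.deg l)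
    {x y z : G.Mor}
    (hxy : G.src x = G.rng y) (hyz : G.src y = G.rng z)
    (hx : G.deg x = a) (hy : G.deg y = b - a)
    (h : G.comp x (G.comp y z) = l) :
    G.seg l a b hab hb = y := by
  have h1 : G.deg l = a + (G.deg l - a) := by
    funext i
    have h2 : a i ≤ b i := hab i
    have h3 : b i ≤ G.deg l i := hb i
    simp only [Pi.add_apply, Pi.sub_apply]
    omega
  have cs1 := (G.factor l a (G.deg l - a) h1).exists.choose_spec
  have h2 : G.deg ((G.factor l a (G.deg l - a) h1).exists.choose.2) =
      (b - a) + (G.deg l - b) := by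
    funext i
    have h3 := congrFun cs1.2.2.1 i
    have h4 : a i ≤ b i := hab i
    have h5 : b i ≤ G.deg l i := hb i
    simp only [Pi.add_apply, Pi.sub_apply] at *
    omega
  have cs2 := (G.factor ((G.factor l a (G.deg l - a) h1).exists.choose.2)
      (b - a) (G.deg l - b) h2).exists.choose_spec
  have hseg : G.seg l a b hab hb =
      ((G.factor ((G.factor l a (G.deg l - a) h1).exists.choose.2)
        (b - a) (G.deg l - b) h2).exists.choose).1 := rfl
  rw [hseg]
  refine G.triple_unique (a := a) (b := b - a)
    (x := (G.factor l a (G.deg l - a) h1).exists.choose.1)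
    (z := (G.factor ((G.factor l a (G.deg l - a) h1).exists.choose.2)
      (b - a) (G.deg l - b) h2).exists.choose.2)
    ?_ cs2.1 cs1.2.1 cs2.2.1 ?_ hxy hyz hx hy h
  · have hr := G.comp_rng _ _ cs2.1
    rw [cs2.2.2.2] at hr
    rw [cs1.1, hr]
  · rw [cs2.2.2.2]; exact cs1.2.2.2

/-- If `μ` and `ν` have a common extension, they have a minimal common extension. -/
lemma mce_nonempty {μ ν l : G.Mor} (h : G.CommonExt μ ν l) : (G.MCE μ ν).Nonempty := by
  obtain ⟨⟨μ', hμs, hμc⟩, ⟨ν', hνs, hνc⟩⟩ := h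
  have hdμ : G.deg l = G.deg μ + G.deg μ' := by rw [← hμc]; exact G.deg_comp μ μ' hμs
  have hdν : G.deg l = G.deg ν + G.deg ν' := by rw [← hνc]; exact G.deg_comp ν ν' hνs
  have harith : ∀ i, G.deg μ i ≤ (G.deg μ ⊔ G.deg ν) i ∧ G.deg ν i ≤ (G.deg μ ⊔ G.deg ν) i ∧
      (G.deg μ ⊔ G.deg ν) i ≤ G.deg l i := by
    intro i
    have h1 := congrFun hdμ i
    have h2 := congrFun hdν i
    simp only [Pi.add_apply] at h1 h2
    simp only [Pi.sup_apply]
    omega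
  have hμ' : G.deg μ' = ((G.deg μ ⊔ G.deg ν) - G.deg μ) + (G.deg l - (G.deg μ ⊔ G.deg ν)) := by
    funext i
    have h1 := congrFun hdμ i
    have h2 := harith i
    simp only [Pi.add_apply, Pi.sub_apply] at *
    omega
  have hν' : G.deg ν' = ((G.deg μ ⊔ G.deg ν) - G.deg ν) + (G.deg l - (G.deg μ ⊔ G.deg ν)) := by
    funext i
    have h1 := congrFun hdν i
    have h2 := harith i
    simp only [Pi.add_apply, Pi.sub_apply] at *
    omega
  obtain ⟨⟨e, f⟩, ⟨hef, hde, hdf, hcef⟩, -⟩ :=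
    G.factor μ' ((G.deg μ ⊔ G.deg ν) - G.deg μ) (G.deg l - (G.deg μ ⊔ G.deg ν)) hμ'
  obtain ⟨⟨e', f'⟩, ⟨hef', hde', hdf', hcef'⟩, -⟩ :=
    G.factor ν' ((G.deg μ ⊔ G.deg ν) - G.deg ν) (G.deg l - (G.deg μ ⊔ G.deg ν)) hν'
  have hμe : G.src μ = G.rng e := by rw [hμs, ← hcef, G.comp_rng e f hef]
  have hνe : G.src ν = G.rng e' := by rw [hνs, ← hcef', G.comp_rng e' f' hef']
  have hl : G.deg l = (G.deg μ ⊔ G.deg ν) + (G.deg l - (G.deg μ ⊔ G.deg ν)) := by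
    funext i
    have h2 := harith i
    simp only [Pi.add_apply, Pi.sub_apply]
    omega
  have hc1 : G.comp (G.comp μ e) f = l := by
    rw [G.comp_assoc μ e f hμe hef, hcef, hμc]
  have hc2 : G.comp (G.comp ν e') f' = l := by
    rw [G.comp_assoc ν e' f' hνe hef', hcef', hνc]
  have hsrc1 : G.src (G.comp μ e) = G.rng f := by rw [G.comp_src μ e hμe]; exact hef
  have hsrc2 : G.src (G.comp ν e') = G.rng f' := by rw [G.comp_src ν e' hνe]; exact hef'
  have hd1 : G.deg (G.comp μ e) = G.deg μ ⊔ G.deg ν := by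
    rw [G.deg_comp μ e hμe, hde]
    funext i
    have h2 := harith i
    simp only [Pi.add_apply, Pi.sub_apply]
    omega
  have hd2 : G.deg (G.comp ν e') = G.deg μ ⊔ G.deg ν := by
    rw [G.deg_comp ν e' hνe, hde']
    funext i
    have h2 := harith i
    simp only [Pi.add_apply, Pi.sub_apply]
    omega
  have heq : ((G.comp μ e, f) : G.Mor × G.Mor) = (G.comp ν e', f') :=
    (G.factor l (G.deg μ ⊔ G.deg ν) (G.deg l - (G.deg μ ⊔ G.deg ν)) hl).unique
      ⟨hsrc1, hd1, hdf, hc1⟩ ⟨hsrc2, hd2, hdf', hc2⟩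
  have hkey : G.comp μ e = G.comp ν e' := congrArg Prod.fst heq
  exact ⟨G.comp μ e, ⟨⟨e, hμe, rfl⟩, ⟨e', hνe, hkey.symm⟩⟩, hd1⟩

end KGraph

/-- If `Λ` has no sources and for every pair of distinct paths `α, β` with
`s(α) = s(β)` there is `τ ∈ s(α)Λ` with `MCE(ατ, βτ) = ∅`, then for every
vertex `v` and every `m ≠ n` there is `λ ∈ vΛ` with `d(λ) ≥ m ∨ n`
satisfying (⋆). -/
theorem star_of_conditionW {k : ℕ} (G : KGraph k)
    (hns : ∀ (v : G.Obj) (p : Fin k → ℕ), ∃ l : G.Mor, G.rng l = v ∧ G.deg l = p)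
    (hW : ∀ α β : G.Mor, α ≠ β → G.src α = G.src β →
      ∃ τ : G.Mor, G.rng τ = G.src α ∧ G.MCE (G.comp α τ) (G.comp β τ) = ∅) :
    ∀ (v : G.Obj) (m n : Fin k → ℕ), m ≠ n →
      ∃ l : G.Mor, G.rng l = v ∧ m ⊔ n ≤ G.deg l ∧ G.SegCond l m n := by
  intro v m n hmn
  have hpm : ∀ i, (m ⊔ n) i = max (m i) (n i) := fun i => by
    simp [Pi.sup_apply]
  obtain ⟨μ, hμv, hμd⟩ := hns v (m ⊔ n)
  have hmd : G.deg μ = m + ((m ⊔ n) - m) := by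
    funext i
    have h1 := congrFun hμd i
    have h2 := hpm i
    simp only [Pi.add_apply, Pi.sub_apply] at *
    omega
  have hnd : G.deg μ = n + ((m ⊔ n) - n) := by
    funext i
    have h1 := congrFun hμd i
    have h2 := hpm i
    simp only [Pi.add_apply, Pi.sub_apply] at *
    omega
  obtain ⟨⟨xm, α⟩, ⟨hxα, hdxm, hdα, hcα⟩, -⟩ := G.factor μ m ((m ⊔ n) - m) hmd
  obtain ⟨⟨xn, β⟩, ⟨hxβ, hdxn, hdβ, hcβ⟩, -⟩ := G.factor μ n ((m ⊔ n) - n) hnd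
  have hsα : G.src α = G.src μ := by rw [← hcα, G.comp_src xm α hxα]
  have hsβ : G.src β = G.src μ := by rw [← hcβ, G.comp_src xn β hxβ]
  have hαβ : α ≠ β := by
    intro hcon
    obtain ⟨i, hi⟩ : ∃ i, m i ≠ n i := by
      by_contra hc; push_neg at hc; exact hmn (funext hc)
    have h1 := congrFun hdα i
    have h2 := congrFun hdβ i
    rw [hcon] at h1
    have h3 := hpm i
    simp only [Pi.sub_apply] at *
    omega
  obtain ⟨τ, hτr, hMCE⟩ := hW α β hαβ (by rw [hsα, hsβ])
  obtain ⟨τ₂, hτ₂r, hτ₂d⟩ := hns (G.src τ) (m ⊔ n)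
  have hττ₂ : G.src τ = G.rng τ₂ := hτ₂r.symm
  have hατ : G.src α = G.rng τ := hτr.symm
  have hμτ : G.src μ = G.rng (G.comp τ τ₂) := by
    rw [G.comp_rng τ τ₂ hττ₂, hτr, hsα]
  refine ⟨G.comp μ (G.comp τ τ₂), ?_, ?_, ?_⟩
  · rw [G.comp_rng μ _ hμτ]; exact hμv
  · have hdl : G.deg (G.comp μ (G.comp τ τ₂)) = (m ⊔ n) + (G.deg τ + (m ⊔ n)) := by
      rw [G.deg_comp μ _ hμτ, G.deg_comp τ τ₂ hττ₂, hμd, hτ₂d]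
    intro i
    have h1 := congrFun hdl i
    simp only [Pi.add_apply, Pi.sup_apply] at h1 ⊢
    omega
  · intro h1 h2 h3 h4 heq
    have hdl : G.deg (G.comp μ (G.comp τ τ₂)) = (m ⊔ n) + (G.deg τ + (m ⊔ n)) := by
      rw [G.deg_comp μ _ hμτ, G.deg_comp τ τ₂ hττ₂, hμd, hτ₂d]
    -- split τ₂ at m and at n
    have hτ₂m : G.deg τ₂ = m + ((m ⊔ n) - m) := by rw [hτ₂d]; rw [hμd] at hmd; exact hmd
    have hτ₂n : G.deg τ₂ = n + ((m ⊔ n) - n) := by rw [hτ₂d]; rw [hμd] at hnd; exact hnd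
    obtain ⟨⟨c, d⟩, ⟨hcd, hdc, hdd, hccd⟩, -⟩ := G.factor τ₂ m ((m ⊔ n) - m) hτ₂m
    obtain ⟨⟨c', d'⟩, ⟨hcd', hdc', hdd', hccd'⟩, -⟩ := G.factor τ₂ n ((m ⊔ n) - n) hτ₂n
    have hτc : G.src τ = G.rng c := by rw [hττ₂, ← hccd, G.comp_rng c d hcd]
    have hτc' : G.src τ = G.rng c' := by rw [hττ₂, ← hccd', G.comp_rng c' d' hcd']
    -- the two middle segments
    have hα_tc : G.src α = G.rng (G.comp τ c) := by rw [G.comp_rng τ c hτc]; exact hατ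
    have hstc : G.src (G.comp τ c) = G.rng d := by rw [G.comp_src τ c hτc]; exact hcd
    have hβτ : G.src β = G.rng τ := by rw [hsβ, ← hsα]; exact hατ
    have hβ_tc : G.src β = G.rng (G.comp τ c') := by rw [G.comp_rng τ c' hτc']; exact hβτ
    have hstc' : G.src (G.comp τ c') = G.rng d' := by rw [G.comp_src τ c' hτc']; exact hcd'
    have hxm_Y : G.src xm = G.rng (G.comp α (G.comp τ c)) := by
      rw [G.comp_rng α _ hα_tc]; exact hxα
    have hxn_Y : G.src xn = G.rng (G.comp β (G.comp τ c')) := by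
      rw [G.comp_rng β _ hβ_tc]; exact hxβ
    have hY_src : G.src (G.comp α (G.comp τ c)) = G.rng d := by
      rw [G.comp_src α _ hα_tc]; exact hstc
    have hY'_src : G.src (G.comp β (G.comp τ c')) = G.rng d' := by
      rw [G.comp_src β _ hβ_tc]; exact hstc'
    have hdY : G.deg (G.comp α (G.comp τ c)) = G.deg α + (G.deg τ + G.deg c) := by
      rw [G.deg_comp α _ hα_tc, G.deg_comp τ c hτc]
    have hdY' : G.deg (G.comp β (G.comp τ c')) = G.deg β + (G.deg τ + G.deg c') := by
      rw [G.deg_comp β _ hβ_tc, G.deg_comp τ c' hτc']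
    have hdYm : G.deg (G.comp α (G.comp τ c)) =
        (m + (G.deg (G.comp μ (G.comp τ τ₂)) - (m ⊔ n))) - m := by
      funext i
      have a1 := congrFun hdY i
      have a2 := congrFun hdα i
      have a3 := congrFun hdc i
      have a4 := congrFun hdl i
      have a5 := hpm i
      simp only [Pi.add_apply, Pi.sub_apply] at *
      omega
    have hdYn : G.deg (G.comp β (G.comp τ c')) =
        (n + (G.deg (G.comp μ (G.comp τ τ₂)) - (m ⊔ n))) - n := by
      funext i
      have a1 := congrFun hdY' i
      have a2 := congrFun hdβ i
      have a3 := congrFun hdc' i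
      have a4 := congrFun hdl i
      have a5 := hpm i
      simp only [Pi.add_apply, Pi.sub_apply] at *
      omega
    -- associativity: l = xm · (α τ c) · d  and  l = xn · (β τ c') · d'
    have e1 : G.comp μ (G.comp τ τ₂) = G.comp xm (G.comp α (G.comp τ τ₂)) := by
      rw [← hcα, G.comp_assoc xm α (G.comp τ τ₂) hxα
        (by rw [G.comp_rng τ τ₂ hττ₂]; exact hατ)]
    have e1' : G.comp μ (G.comp τ τ₂) = G.comp xn (G.comp β (G.comp τ τ₂)) := by
      rw [← hcβ, G.comp_assoc xn β (G.comp τ τ₂) hxβ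
        (by rw [G.comp_rng τ τ₂ hττ₂]; exact hβτ)]
    have e2 : G.comp τ τ₂ = G.comp (G.comp τ c) d := by
      rw [← hccd, G.comp_assoc τ c d hτc hcd]
    have e2' : G.comp τ τ₂ = G.comp (G.comp τ c') d' := by
      rw [← hccd', G.comp_assoc τ c' d' hτc' hcd']
    have e4 : G.comp xm (G.comp (G.comp α (G.comp τ c)) d) = G.comp μ (G.comp τ τ₂) := by
      rw [e1, e2, G.comp_assoc α (G.comp τ c) d hα_tc hstc]
    have e4' : G.comp xn (G.comp (G.comp β (G.comp τ c')) d') = G.comp μ (G.comp τ τ₂) := by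
      rw [e1', e2', G.comp_assoc β (G.comp τ c') d' hβ_tc hstc']
    have hsm := G.seg_eq h1 h2 hxm_Y hY_src hdxm hdYm e4
    have hsn := G.seg_eq h3 h4 hxn_Y hY'_src hdxn hdYn e4'
    rw [hsm, hsn] at heq
    -- Y is a common extension of ατ and βτ
    have hατc : G.src (G.comp α τ) = G.rng c := by rw [G.comp_src α τ hατ]; exact hτc
    have hβτc : G.src (G.comp β τ) = G.rng c' := by rw [G.comp_src β τ hβτ]; exact hτc'
    have hYc : G.comp (G.comp α τ) c = G.comp α (G.comp τ c) := G.comp_assoc α τ c hατ hτc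
    have hY'c : G.comp (G.comp β τ) c' = G.comp β (G.comp τ c') :=
      G.comp_assoc β τ c' hβτ hτc'
    have hce : G.CommonExt (G.comp α τ) (G.comp β τ) (G.comp α (G.comp τ c)) :=
      ⟨⟨c, hατc, hYc⟩, ⟨c', hβτc, by rw [hY'c, heq]⟩⟩
    have hne := G.mce_nonempty hce
    rw [hMCE] at hne
    exact Set.not_nonempty_empty hne
end
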